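/- arXiv:2206.03403 — 3 statements merged into one kernel-verified Lean document; each statement's English description precedes it below -/
import Mathlib

section
/- Let G be a finite group, A a coprime group of automorphisms of G, and N an A-invariant normal subgroup of G such that every element of N is fixed by A (i.e. N = C_N(A)). Then [G,A] centralizes N. -/
/-- The subgroup `[G,A]` generated by all `g⁻¹ · αg` for `g ∈ G`, `α ∈ A`. -/
def autCommutatorSubgroup {G : Type*} [Group G] (A : Subgroup (MulAut G)) : Subgroup G :=
  Subgroup.closure {x | ∃ g : G, ∃ α ∈ A, x = g⁻¹ * α g}

theorem commutator_centralizes_fixed_normal (G : Type*) [Group G] [Finite G]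
    (A : Subgroup (MulAut G)) (hcop : Nat.Coprime (Nat.card G) (Nat.card A))
    (N : Subgroup G) [N.Normal] (hNinv : ∀ α ∈ A, N.map α.toMonoidHom = N)
    (hfix : ∀ n ∈ N, ∀ α ∈ A, α n = n) :
    ∀ x ∈ autCommutatorSubgroup A, ∀ n ∈ N, x * n = n * x := by
  have hsub : autCommutatorSubgroup A ≤ Subgroup.centralizer (N : Set G) := by
    rw [autCommutatorSubgroup, Subgroup.closure_le]
    rintro x ⟨g, α, hα, rfl⟩
    rw [SetLike.mem_coe, Subgroup.mem_centralizer_iff]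
    intro n hn
    have hgng : g * n * g⁻¹ ∈ N := Subgroup.Normal.conj_mem ‹N.Normal› n hn g
    have key : α g * n * (α g)⁻¹ = g * n * g⁻¹ := by
      have h1 : α (g * n * g⁻¹) = g * n * g⁻¹ := hfix _ hgng α hα
      have h2 : α (g * n * g⁻¹) = α g * α n * (α g)⁻¹ := by
        simp [map_mul]
      rw [h2, hfix n hn α hα] at h1
      exact h1
    -- goal : n * (g⁻¹ * α g) = (g⁻¹ * α g) * n
    calc n * (g⁻¹ * α g) = g⁻¹ * (g * n * g⁻¹) * α g := by group
      _ = g⁻¹ * (α g * n * (α g)⁻¹) * α g := by rw [key]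
      _ = g⁻¹ * α g * n := by group
  intro x hx n hn
  exact (Subgroup.mem_centralizer_iff.mp (hsub hx) n hn).symm
end

section
/- For n ≥ 5, let G = S_n be the symmetric group and α conjugation by a transposition. Then every pair of elements of I_G(α) = { g⁻¹ g^α : g ∈ G } generates a soluble subgroup, but [G,α] = ⟨I_G(α)⟩ is not soluble. -/
open Subgroup Equiv Equiv.Perm
open scoped commutatorElement

set_option maxHeartbeats 1000000
set_option maxRecDepth 40000

section Helpers

lemma closure_pair_comm {G : Type*} [Group G] {u v : G} (h : u * v = v * u) :
    ∀ a ∈ Subgroup.closure ({u, v} : Set G), ∀ b ∈ Subgroup.closure ({u, v} : Set G),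
      a * b = b * a := by
  have hsub : ({u, v} : Set G) ⊆ Subgroup.centralizer {u, v} := by
    rintro p hp
    simp only [SetLike.mem_coe]
    rw [Subgroup.mem_centralizer_iff]
    rintro q hq
    rcases hp with rfl | rfl <;> rcases hq with rfl | rfl
    · rfl
    · exact h.symm
    · exact h
    · rfl
  intro a ha b hb
  have ha' : a ∈ Subgroup.centralizer {u, v} := (Subgroup.closure_le _).mpr hsub ha
  have hsub2 : ({u, v} : Set G) ⊆ Subgroup.centralizer {a} := by
    rintro p hp
    simp only [SetLike.mem_coe]
    rw [Subgroup.mem_centralizer_iff]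
    rintro q rfl
    exact (Subgroup.mem_centralizer_iff.mp ha' p hp).symm
  have hb' : b ∈ Subgroup.centralizer {a} := (Subgroup.closure_le _).mpr hsub2 hb
  exact Subgroup.mem_centralizer_iff.mp hb' a rfl

lemma solvable_aux {G : Type*} [Group G] [Finite G] {x y z : G}
    (hx : x * z * x⁻¹ ∈ zpowers z) (hy : y * z * y⁻¹ ∈ zpowers z)
    (hc : ⁅x, y⁆ ∈ zpowers z) : IsSolvable (Subgroup.closure ({x, y} : Set G)) := by
  have hconj : ∀ w : G, w * z * w⁻¹ ∈ zpowers z → w ∈ Subgroup.normalizer ((zpowers z : Subgroup G) : Set G) := by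
    intro w hw
    have key : ∀ u, u ∈ ((zpowers z : Subgroup G) : Set G) →
        w * u * w⁻¹ ∈ ((zpowers z : Subgroup G) : Set G) := by
      intro u hu
      obtain ⟨k, rfl⟩ := Subgroup.mem_zpowers_iff.mp hu
      have h2 : w * z ^ k * w⁻¹ = (w * z * w⁻¹) ^ k := by
        have := map_zpow (MulAut.conj w) z k
        simpa [MulAut.conj_apply] using this.symm
      simp only [SetLike.mem_coe]
      rw [h2]
      exact Subgroup.zpow_mem _ hw k
    have h3 := Subgroup.mem_normalizer_fintype (S := ((zpowers z : Subgroup G) : Set G))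
      (x := w) key
    rw [Subgroup.mem_normalizer_iff]
    exact fun h => h3 h
  have hxN := hconj x hx
  have hyN := hconj y hy
  set N : Subgroup G := zpowers z with hNdef
  set K := Subgroup.closure ({x, y} : Set G) with hK
  have hxK : x ∈ K := Subgroup.subset_closure (Set.mem_insert _ _)
  have hyK : y ∈ K := Subgroup.subset_closure (Set.mem_insert_of_mem _ rfl)
  have hKH : K ≤ (Subgroup.normalizer (N : Set G)) := by
    rw [hK, Subgroup.closure_le]
    rintro w (rfl | rfl)
    exacts [hxN, hyN]
  haveI hNn : (N.subgroupOf (Subgroup.normalizer (N : Set G))).Normal := Subgroup.normal_in_normalizer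
  let q : (Subgroup.normalizer (N : Set G)) →* (Subgroup.normalizer (N : Set G)) ⧸ (N.subgroupOf (Subgroup.normalizer (N : Set G))) :=
    QuotientGroup.mk' (N.subgroupOf (Subgroup.normalizer (N : Set G)))
  let ι : K →* (Subgroup.normalizer (N : Set G)) := Subgroup.inclusion hKH
  let g : K →* (Subgroup.normalizer (N : Set G)) ⧸ (N.subgroupOf (Subgroup.normalizer (N : Set G))) := q.comp ι
  have hgone : ∀ k : K, (k : G) ∈ N → g k = 1 := by
    intro k hk
    refine (QuotientGroup.eq_one_iff _).mpr ?_
    refine Subgroup.mem_subgroupOf.mpr ?_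
    rwa [Subgroup.coe_inclusion]
  have hgker : ∀ k : K, g k = 1 → (k : G) ∈ N := by
    intro k hk
    have h1 : ι k ∈ N.subgroupOf (Subgroup.normalizer (N : Set G)) := (QuotientGroup.eq_one_iff _).mp hk
    have h2 := Subgroup.mem_subgroupOf.mp h1
    rwa [Subgroup.coe_inclusion] at h2
  have hT : ((y * x)⁻¹ * (x * y) : G) = (x * y)⁻¹ * ⁅x, y⁆ * (x * y) := by group
  have hxyN : ((y * x)⁻¹ * (x * y) : G) ∈ N := by
    rw [hT]
    exact (Subgroup.mem_normalizer_iff''.mp (mul_mem hxN hyN) _).mp hc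
  have huv : g ⟨x, hxK⟩ * g ⟨y, hyK⟩ = g ⟨y, hyK⟩ * g ⟨x, hxK⟩ := by
    refine ((inv_mul_eq_one.mp ?_).symm)
    have e1 : (g ⟨y, hyK⟩ * g ⟨x, hxK⟩)⁻¹ * (g ⟨x, hxK⟩ * g ⟨y, hyK⟩)
        = g ((⟨y, hyK⟩ * ⟨x, hxK⟩ : K)⁻¹ * (⟨x, hxK⟩ * ⟨y, hyK⟩ : K)) := by
      rw [map_mul, map_inv, map_mul, map_mul]
    rw [e1]
    exact hgone _ hxyN
  have hA : ∀ (w : G) (hw : w ∈ K),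
      g ⟨w, hw⟩ ∈ Subgroup.closure ({g ⟨x, hxK⟩, g ⟨y, hyK⟩} : Set _) := by
    intro w hw
    refine Subgroup.closure_induction
      (p := fun w hw => g ⟨w, hw⟩ ∈ Subgroup.closure ({g ⟨x, hxK⟩, g ⟨y, hyK⟩} : Set _))
      ?_ ?_ ?_ ?_ hw
    · rintro w' (rfl | rfl)
      · beta_reduce
        exact Subgroup.subset_closure (Set.mem_insert _ _)
      · beta_reduce
        exact Subgroup.subset_closure (Set.mem_insert_of_mem _ rfl)
    · beta_reduce
      rw [show ((⟨1, one_mem K⟩ : K)) = (1 : K) from rfl, map_one]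
      exact one_mem _
    · intro a b ha hb hpa hpb
      beta_reduce
      rw [show (⟨a * b, mul_mem ha hb⟩ : K) = ⟨a, ha⟩ * ⟨b, hb⟩ from rfl, map_mul]
      exact mul_mem hpa hpb
    · intro a ha hpa
      beta_reduce
      rw [show (⟨a⁻¹, inv_mem ha⟩ : K) = (⟨a, ha⟩ : K)⁻¹ from rfl, map_inv]
      exact inv_mem hpa
  have hcomm : ∀ k1 k2 : K, g k1 * g k2 = g k2 * g k1 := by
    intro k1 k2
    exact closure_pair_comm huv _ (hA k1 k1.2) _ (hA k2 k2.2)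
  have hrange : ∀ a b : g.range, a * b = b * a := by
    rintro ⟨a, k1, rfl⟩ ⟨b, k2, rfl⟩
    exact Subtype.ext (hcomm k1 k2)
  haveI hRsolv : Group.IsSolvable g.range := isSolvable_of_comm hrange
  haveI : Group.IsSolvable N := by
    refine isSolvable_of_comm ?_
    rintro ⟨a, ha⟩ ⟨b, hb⟩
    obtain ⟨m, rfl⟩ := Subgroup.mem_zpowers_iff.mp ha
    obtain ⟨k, rfl⟩ := Subgroup.mem_zpowers_iff.mp hb
    refine Subtype.ext ?_
    simpa using zpow_mul_comm z m k
  haveI : Group.IsSolvable g.ker := by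
    have hinj : Function.Injective (fun k : g.ker => (⟨((k : K) : G), hgker k k.2⟩ : N)) := by
      intro a b hab
      have := congrArg Subtype.val hab
      simp only at this
      exact Subtype.ext (Subtype.ext this)
    exact solvable_of_solvable_injective
      (f := MonoidHom.mk' (fun k : g.ker => (⟨((k : K) : G), hgker k k.2⟩ : N))
        (fun a b => Subtype.ext rfl)) hinj
  refine solvable_of_ker_le_range g.ker.subtype g.rangeRestrict ?_
  rw [MonoidHom.ker_rangeRestrict, Subgroup.range_subtype]

def V4 : Subgroup (Equiv.Perm (Fin 4)) where
  carrier := {σ | σ * σ = 1 ∧ σ.sign = 1}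
  one_mem' := by decide
  mul_mem' := by
    have : ∀ a b : Equiv.Perm (Fin 4), (a*a=1 ∧ sign a = 1) → (b*b=1 ∧ sign b = 1) →
        ((a*b)*(a*b) = 1 ∧ sign (a*b) = 1) := by decide
    intro a b ha hb; exact this a b ha hb
  inv_mem' := by
    have : ∀ a : Equiv.Perm (Fin 4), (a*a=1 ∧ sign a = 1) → (a⁻¹*a⁻¹=1 ∧ sign a⁻¹ = 1) := by
      decide
    intro a ha; exact this a ha

theorem perm4_solvable : IsSolvable (Equiv.Perm (Fin 4)) := by
  have h1 : derivedSeries (Equiv.Perm (Fin 4)) 1 ≤ alternatingGroup (Fin 4) := by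
    rw [derivedSeries_succ, Subgroup.commutator_le]
    have : ∀ a b : Equiv.Perm (Fin 4), sign ⁅a,b⁆ = 1 := by decide
    intro g _ h _; exact mem_alternatingGroup.mpr (this g h)
  have h2 : derivedSeries (Equiv.Perm (Fin 4)) 2 ≤ V4 := by
    refine le_trans (Subgroup.commutator_mono h1 h1) ?_
    rw [Subgroup.commutator_le]
    have : ∀ a b : Equiv.Perm (Fin 4), sign a = 1 → sign b = 1 →
        (⁅a,b⁆*⁅a,b⁆ = 1 ∧ sign ⁅a,b⁆ = 1) := by decide
    intro g hg h hh; exact this g h (mem_alternatingGroup.mp hg) (mem_alternatingGroup.mp hh)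
  have h3 : derivedSeries (Equiv.Perm (Fin 4)) 3 ≤ ⊥ := by
    refine le_trans (Subgroup.commutator_mono h2 h2) ?_
    rw [Subgroup.commutator_le]
    have : ∀ a b : Equiv.Perm (Fin 4), (a*a=1 ∧ sign a = 1) → (b*b=1 ∧ sign b = 1) →
        ⁅a,b⁆ = 1 := by decide
    intro g hg h hh; rw [Subgroup.mem_bot]; exact this g h hg hh
  exact ⟨⟨3, le_bot_iff.mp h3⟩⟩

theorem solv_supp {n : ℕ} (s : Finset (Fin n)) (hcard : s.card ≤ 4)
    (x y : Equiv.Perm (Fin n)) (hx : ∀ k, k ∉ s → x k = k) (hy : ∀ k, k ∉ s → y k = k) :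
    IsSolvable (Subgroup.closure ({x, y} : Set (Equiv.Perm (Fin n)))) := by
  classical
  set P : Subgroup (Equiv.Perm (Fin n)) :=
    { carrier := {σ | ∀ k, k ∉ s → σ k = k}
      one_mem' := fun _ _ => rfl
      mul_mem' := by
        intro a b ha hb k hk
        simp only [Equiv.Perm.mul_apply]
        rw [hb k hk, ha k hk]
      inv_mem' := by
        intro a ha k hk
        have h1 : a⁻¹ (a k) = k := a.symm_apply_apply k
        rwa [ha k hk] at h1  } with hP
  have hmem : ∀ σ : Equiv.Perm (Fin n), σ ∈ P → ∀ k : Fin n, k ∈ s ↔ σ k ∈ s := by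
    intro σ hσ k
    constructor
    · intro hk
      by_contra hne
      have h1 : σ (σ k) = σ k := hσ _ hne
      have h2 : σ k = k := σ.injective h1
      rw [h2] at hne
      exact hne hk
    · intro hk
      by_contra hne
      rw [hσ k hne] at hk
      exact hne hk
  let φ : P →* Equiv.Perm {k : Fin n // k ∈ s} :=
    { toFun := fun σ => Equiv.Perm.subtypePerm σ.1 (fun k => (hmem σ.1 σ.2 k).symm)
      map_one' := by ext k; rfl
      map_mul' := by intro a b; ext k; rfl }
  have hφinj : Function.Injective φ := by
    intro a b hab
    refine Subtype.ext (Equiv.ext fun k => ?_)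
    by_cases hk : k ∈ s
    · have := congrArg (fun (e : Equiv.Perm {k : Fin n // k ∈ s}) => (e ⟨k, hk⟩ : Fin n)) hab
      simpa [φ] using this
    · rw [a.2 k hk, b.2 k hk]
  have hcard2 : Fintype.card {k : Fin n // k ∈ s} ≤ Fintype.card (Fin 4) := by
    simpa [Fintype.card_coe] using hcard
  obtain ⟨e⟩ := Function.Embedding.nonempty_of_card_le hcard2
  haveI : Group.IsSolvable (Equiv.Perm (Fin 4)) := perm4_solvable
  haveI : Group.IsSolvable (Equiv.Perm {k : Fin n // k ∈ s}) :=
    solvable_of_solvable_injective (Equiv.Perm.viaEmbeddingHom_injective e)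
  haveI hPsolv : Group.IsSolvable P := solvable_of_solvable_injective hφinj
  have hle : Subgroup.closure ({x, y} : Set (Equiv.Perm (Fin n))) ≤ P := by
    rw [Subgroup.closure_le]
    rintro w (rfl | rfl)
    exacts [hx, hy]
  exact solvable_of_solvable_injective (Subgroup.inclusion_injective hle)

lemma card_le_three {α : Type*} [DecidableEq α] (p q v : α) :
    ({p, q, v} : Finset α).card ≤ 3 := by
  have h1 := Finset.card_insert_le p ({q, v} : Finset α)
  have h2 := Finset.card_insert_le q ({v} : Finset α)
  simp only [Finset.card_singleton] at h1 h2
  omega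

lemma card3 {α : Type*} [DecidableEq α] (p q u v : α)
    (h : u = p ∨ u = q ∨ v = p ∨ v = q) : ({p, q, u, v} : Finset α).card ≤ 3 := by
  rcases h with rfl | rfl | rfl | rfl
  · exact le_trans (Finset.card_le_card (by intro k hk; simp at hk ⊢; tauto)) (card_le_three u q v)
  · exact le_trans (Finset.card_le_card (by intro k hk; simp at hk ⊢; tauto)) (card_le_three p u v)
  · exact le_trans (Finset.card_le_card (by intro k hk; simp at hk ⊢; tauto)) (card_le_three v q u)
  · exact le_trans (Finset.card_le_card (by intro k hk; simp at hk ⊢; tauto)) (card_le_three p v u)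

lemma card_union4 {α : Type*} [DecidableEq α] (p q u v r s : α) (hpq : p ≠ q)
    (h1 : u = p ∨ u = q ∨ v = p ∨ v = q) (h2 : r = p ∨ r = q ∨ s = p ∨ s = q) :
    ({p, q, u, v, r, s} : Finset α).card ≤ 4 := by
  have hA := card3 p q u v h1
  have hB := card3 p q r s h2
  have hunion : ({p, q, u, v, r, s} : Finset α) = {p, q, u, v} ∪ {p, q, r, s} := by
    ext k; simp; tauto
  have hint : ({p, q} : Finset α) ⊆ {p, q, u, v} ∩ {p, q, r, s} := by
    intro k hk; simp at hk ⊢; tauto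
  have h2card : 2 ≤ (({p, q, u, v} : Finset α) ∩ {p, q, r, s}).card := by
    have hc2 : ({p, q} : Finset α).card = 2 := by
      rw [Finset.card_insert_of_notMem (by simp [hpq]), Finset.card_singleton]
    rw [← hc2]
    exact Finset.card_le_card hint
  have hui := Finset.card_union_add_card_inter ({p, q, u, v} : Finset α) {p, q, r, s}
  rw [hunion]
  omega

lemma swap_disjoint_commute {α : Type*} [DecidableEq α] {a b i j : α}
    (h1 : a ≠ i) (h2 : a ≠ j) (h3 : b ≠ i) (h4 : b ≠ j) :
    Commute (Equiv.swap a b) (Equiv.swap i j) := by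
  apply Equiv.Perm.Disjoint.commute
  intro k
  by_cases hk : k = a ∨ k = b
  · right
    rcases hk with rfl | rfl
    · exact Equiv.swap_apply_of_ne_of_ne h1 h2
    · exact Equiv.swap_apply_of_ne_of_ne h3 h4
  · left
    push_neg at hk
    exact Equiv.swap_apply_of_ne_of_ne hk.1 hk.2

theorem main_solv {n : ℕ} (i j a b c d : Fin n) (hij : i ≠ j) (hab : a ≠ b) (hcd : c ≠ d) :
    IsSolvable (Subgroup.closure ({Equiv.swap a b * Equiv.swap i j,
      Equiv.swap c d * Equiv.swap i j} : Set (Equiv.Perm (Fin n)))) := by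
  classical
  have hs1 : Equiv.swap a b * Equiv.swap a b = 1 := Equiv.swap_mul_self a b
  have hs2 : Equiv.swap c d * Equiv.swap c d = 1 := Equiv.swap_mul_self c d
  have ht : Equiv.swap i j * Equiv.swap i j = 1 := Equiv.swap_mul_self i j
  have hs1' : (Equiv.swap a b)⁻¹ = Equiv.swap a b := Equiv.swap_inv a b
  have hs2' : (Equiv.swap c d)⁻¹ = Equiv.swap c d := Equiv.swap_inv c d
  have ht' : (Equiv.swap i j)⁻¹ = Equiv.swap i j := Equiv.swap_inv i j
  have c1 : ∀ w, Equiv.swap a b * (Equiv.swap a b * w) = w := fun w => by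
    rw [← mul_assoc, hs1, one_mul]
  have c2 : ∀ w, Equiv.swap c d * (Equiv.swap c d * w) = w := fun w => by
    rw [← mul_assoc, hs2, one_mul]
  have c3 : ∀ w, Equiv.swap i j * (Equiv.swap i j * w) = w := fun w => by
    rw [← mul_assoc, ht, one_mul]
  have hfix1 : ∀ k : Fin n, k ≠ a → k ≠ b → k ≠ i → k ≠ j →
      (Equiv.swap a b * Equiv.swap i j) k = k := by
    intro k h1 h2 h3 h4
    rw [Equiv.Perm.mul_apply, Equiv.swap_apply_of_ne_of_ne h3 h4,
      Equiv.swap_apply_of_ne_of_ne h1 h2]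
  have hfix2 : ∀ k : Fin n, k ≠ c → k ≠ d → k ≠ i → k ≠ j →
      (Equiv.swap c d * Equiv.swap i j) k = k := by
    intro k h1 h2 h3 h4
    rw [Equiv.Perm.mul_apply, Equiv.swap_apply_of_ne_of_ne h3 h4,
      Equiv.swap_apply_of_ne_of_ne h1 h2]
  by_cases hP : a = i ∨ a = j ∨ b = i ∨ b = j
  · by_cases hQ : c = i ∨ c = j ∨ d = i ∨ d = j
    · -- support in {i,j,a,b,c,d} of card ≤ 4
      refine solv_supp ({i, j, a, b, c, d} : Finset (Fin n))
        (card_union4 i j a b c d hij hP hQ) _ _ ?_ ?_ <;>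
      · intro k hk
        simp only [Finset.mem_insert, Finset.mem_singleton, not_or] at hk
        obtain ⟨e1, e2, e3, e4, e5, e6⟩ := hk
        first
        | exact hfix1 k e3 e4 e1 e2
        | exact hfix2 k e5 e6 e1 e2
    · by_cases hR : a = c ∨ a = d ∨ b = c ∨ b = d
      · -- support case with center {a,b}
        have hP' : i = a ∨ i = b ∨ j = a ∨ j = b := by
          rcases hP with h | h | h | h
          · exact Or.inl h.symm
          · exact Or.inr (Or.inr (Or.inl h.symm))
          · exact Or.inr (Or.inl h.symm)
          · exact Or.inr (Or.inr (Or.inr h.symm))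
        have hR' : c = a ∨ c = b ∨ d = a ∨ d = b := by
          rcases hR with h | h | h | h
          · exact Or.inl h.symm
          · exact Or.inr (Or.inr (Or.inl h.symm))
          · exact Or.inr (Or.inl h.symm)
          · exact Or.inr (Or.inr (Or.inr h.symm))
        refine solv_supp ({a, b, i, j, c, d} : Finset (Fin n))
          (card_union4 a b i j c d hab hP' hR') _ _ ?_ ?_ <;>
        · intro k hk
          simp only [Finset.mem_insert, Finset.mem_singleton, not_or] at hk
          obtain ⟨e1, e2, e3, e4, e5, e6⟩ := hk
          first
          | exact hfix1 k e1 e2 e3 e4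
          | exact hfix2 k e5 e6 e3 e4
      · -- D3 : swap c d disjoint from the others, z := swap a b * swap i j
        push_neg at hQ hR
        obtain ⟨q1, q2, q3, q4⟩ := hQ
        obtain ⟨r1, r2, r3, r4⟩ := hR
        have h2t : Commute (Equiv.swap c d) (Equiv.swap i j) :=
          swap_disjoint_commute q1 q2 q3 q4
        have h21 : Commute (Equiv.swap c d) (Equiv.swap a b) :=
          (swap_disjoint_commute r1 r2 r3 r4).symm
        have m1 : ∀ w, Equiv.swap c d * (Equiv.swap i j * w)
            = Equiv.swap i j * (Equiv.swap c d * w) := fun w => by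
          rw [← mul_assoc, h2t.eq, mul_assoc]
        have m2 : ∀ w, Equiv.swap c d * (Equiv.swap a b * w)
            = Equiv.swap a b * (Equiv.swap c d * w) := fun w => by
          rw [← mul_assoc, h21.eq, mul_assoc]
        have key : (Equiv.swap c d * Equiv.swap i j) * (Equiv.swap a b * Equiv.swap i j) *
            (Equiv.swap c d * Equiv.swap i j)⁻¹ = (Equiv.swap a b * Equiv.swap i j)⁻¹ := by
          simp only [mul_inv_rev, hs1', hs2', ht', mul_assoc, m1, m2, c1, c2, c3,
            h2t.eq, h21.eq, hs1, hs2, ht, mul_one, one_mul]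
        have key2 : (Equiv.swap c d * Equiv.swap i j) * (Equiv.swap a b * Equiv.swap i j)⁻¹ *
            (Equiv.swap c d * Equiv.swap i j)⁻¹ = Equiv.swap a b * Equiv.swap i j := by
          simp only [mul_inv_rev, hs1', hs2', ht', mul_assoc, m1, m2, c1, c2, c3,
            h2t.eq, h21.eq, hs1, hs2, ht, mul_one, one_mul]
        refine solvable_aux (z := Equiv.swap a b * Equiv.swap i j) ?_ ?_ ?_
        · rw [mul_inv_cancel_right]
          exact Subgroup.mem_zpowers _
        · rw [key]
          exact inv_mem (Subgroup.mem_zpowers _)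
        · rw [commutatorElement_def]
          have hre : (Equiv.swap a b * Equiv.swap i j) * (Equiv.swap c d * Equiv.swap i j) *
              (Equiv.swap a b * Equiv.swap i j)⁻¹ * (Equiv.swap c d * Equiv.swap i j)⁻¹
              = (Equiv.swap a b * Equiv.swap i j) * ((Equiv.swap c d * Equiv.swap i j) *
                (Equiv.swap a b * Equiv.swap i j)⁻¹ * (Equiv.swap c d * Equiv.swap i j)⁻¹) := by
            group
          rw [hre, key2]
          exact mul_mem (Subgroup.mem_zpowers _) (Subgroup.mem_zpowers _)
  · by_cases hQ : c = i ∨ c = j ∨ d = i ∨ d = j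
    · by_cases hR : a = c ∨ a = d ∨ b = c ∨ b = d
      · -- support case with center {c,d}
        have hQ' : i = c ∨ i = d ∨ j = c ∨ j = d := by
          rcases hQ with h | h | h | h
          · exact Or.inl h.symm
          · exact Or.inr (Or.inr (Or.inl h.symm))
          · exact Or.inr (Or.inl h.symm)
          · exact Or.inr (Or.inr (Or.inr h.symm))
        refine solv_supp ({c, d, i, j, a, b} : Finset (Fin n))
          (card_union4 c d i j a b hcd hQ' hR) _ _ ?_ ?_ <;>
        · intro k hk
          simp only [Finset.mem_insert, Finset.mem_singleton, not_or] at hk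
          obtain ⟨e1, e2, e3, e4, e5, e6⟩ := hk
          first
          | exact hfix1 k e5 e6 e3 e4
          | exact hfix2 k e1 e2 e3 e4
      · -- D2 : swap a b disjoint from the others, z := swap c d * swap i j
        push_neg at hP hR
        obtain ⟨p1, p2, p3, p4⟩ := hP
        obtain ⟨r1, r2, r3, r4⟩ := hR
        have h1t : Commute (Equiv.swap a b) (Equiv.swap i j) :=
          swap_disjoint_commute p1 p2 p3 p4
        have h12 : Commute (Equiv.swap a b) (Equiv.swap c d) :=
          swap_disjoint_commute r1 r2 r3 r4
        have m1 : ∀ w, Equiv.swap a b * (Equiv.swap i j * w)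
            = Equiv.swap i j * (Equiv.swap a b * w) := fun w => by
          rw [← mul_assoc, h1t.eq, mul_assoc]
        have m2 : ∀ w, Equiv.swap a b * (Equiv.swap c d * w)
            = Equiv.swap c d * (Equiv.swap a b * w) := fun w => by
          rw [← mul_assoc, h12.eq, mul_assoc]
        have key : (Equiv.swap a b * Equiv.swap i j) * (Equiv.swap c d * Equiv.swap i j) *
            (Equiv.swap a b * Equiv.swap i j)⁻¹ = (Equiv.swap c d * Equiv.swap i j)⁻¹ := by
          simp only [mul_inv_rev, hs1', hs2', ht', mul_assoc, m1, m2, c1, c2, c3,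
            h1t.eq, h12.eq, hs1, hs2, ht, mul_one, one_mul]
        refine solvable_aux (z := Equiv.swap c d * Equiv.swap i j) ?_ ?_ ?_
        · rw [key]
          exact inv_mem (Subgroup.mem_zpowers _)
        · rw [mul_inv_cancel_right]
          exact Subgroup.mem_zpowers _
        · rw [commutatorElement_def, key]
          exact mul_mem (inv_mem (Subgroup.mem_zpowers _)) (inv_mem (Subgroup.mem_zpowers _))
    · -- D1 : both swap a b and swap c d disjoint from swap i j
      push_neg at hP hQ
      obtain ⟨p1, p2, p3, p4⟩ := hP
      obtain ⟨q1, q2, q3, q4⟩ := hQ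
      have h1t : Commute (Equiv.swap a b) (Equiv.swap i j) :=
        swap_disjoint_commute p1 p2 p3 p4
      have h2t : Commute (Equiv.swap c d) (Equiv.swap i j) :=
        swap_disjoint_commute q1 q2 q3 q4
      have m1 : ∀ w, Equiv.swap i j * (Equiv.swap a b * w)
          = Equiv.swap a b * (Equiv.swap i j * w) := fun w => by
        rw [← mul_assoc, ← h1t.eq, mul_assoc]
      have m2 : ∀ w, Equiv.swap i j * (Equiv.swap c d * w)
          = Equiv.swap c d * (Equiv.swap i j * w) := fun w => by
        rw [← mul_assoc, ← h2t.eq, mul_assoc]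
      have t1 : Equiv.swap i j * Equiv.swap a b = Equiv.swap a b * Equiv.swap i j := h1t.eq.symm
      have t2 : Equiv.swap i j * Equiv.swap c d = Equiv.swap c d * Equiv.swap i j := h2t.eq.symm
      set z : Equiv.Perm (Fin n) :=
        Equiv.swap a b * Equiv.swap c d * (Equiv.swap a b * Equiv.swap c d) with hz
      have key1 : (Equiv.swap a b * Equiv.swap i j) * z *
          (Equiv.swap a b * Equiv.swap i j)⁻¹ = z⁻¹ := by
        rw [hz]
        simp only [mul_inv_rev, hs1', hs2', ht', mul_assoc, m1, m2, c1, c2, c3,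
          t1, t2, hs1, hs2, ht, mul_one, one_mul]
      have key2 : (Equiv.swap c d * Equiv.swap i j) * z *
          (Equiv.swap c d * Equiv.swap i j)⁻¹ = z⁻¹ := by
        rw [hz]
        simp only [mul_inv_rev, hs1', hs2', ht', mul_assoc, m1, m2, c1, c2, c3,
          t1, t2, hs1, hs2, ht, mul_one, one_mul]
      have key3 : ⁅Equiv.swap a b * Equiv.swap i j, Equiv.swap c d * Equiv.swap i j⁆ = z := by
        rw [commutatorElement_def, hz]
        simp only [mul_inv_rev, hs1', hs2', ht', mul_assoc, m1, m2, c1, c2, c3,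
          t1, t2, hs1, hs2, ht, mul_one, one_mul]
      refine solvable_aux (z := z) ?_ ?_ ?_
      · rw [key1]
        exact inv_mem (Subgroup.mem_zpowers _)
      · rw [key2]
        exact inv_mem (Subgroup.mem_zpowers _)
      · rw [key3]
        exact Subgroup.mem_zpowers _

end Helpers

theorem symmetric_group_counterexample (n : ℕ) (hn : 5 ≤ n)
    (i j : Fin n) (hij : i ≠ j) :
    (∀ x ∈ {x : Equiv.Perm (Fin n) | ∃ g, x = g⁻¹ * (MulAut.conj (Equiv.swap i j)) g},
      ∀ y ∈ {x : Equiv.Perm (Fin n) | ∃ g, x = g⁻¹ * (MulAut.conj (Equiv.swap i j)) g},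
        IsSolvable (Subgroup.closure {x, y})) ∧
    ¬ IsSolvable (Subgroup.closure
        {x : Equiv.Perm (Fin n) | ∃ g, x = g⁻¹ * (MulAut.conj (Equiv.swap i j)) g}) := by
  classical
  have e : ∀ g : Equiv.Perm (Fin n), g⁻¹ * (MulAut.conj (Equiv.swap i j)) g
      = Equiv.swap (g⁻¹ i) (g⁻¹ j) * Equiv.swap i j := by
    intro g
    have h1 : Equiv.swap (g⁻¹ i) (g⁻¹ j) = g⁻¹ * Equiv.swap i j * g⁻¹⁻¹ :=
      Equiv.swap_apply_apply g⁻¹ i j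
    rw [h1, inv_inv, MulAut.conj_apply, Equiv.swap_inv]
    group
  constructor
  · rintro x ⟨g, rfl⟩ y ⟨h, rfl⟩
    rw [e g, e h]
    exact main_solv i j (g⁻¹ i) (g⁻¹ j) (h⁻¹ i) (h⁻¹ j) hij
      ((Equiv.injective g⁻¹).ne hij) ((Equiv.injective h⁻¹).ne hij)
  · intro hsolv
    set S := {x : Equiv.Perm (Fin n) | ∃ g, x = g⁻¹ * (MulAut.conj (Equiv.swap i j)) g} with hSdef
    have hS : ∀ u v : Fin n, u ≠ v → Equiv.swap u v * Equiv.swap i j ∈ S := by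
      intro u v huv
      set g : Equiv.Perm (Fin n) :=
        Equiv.swap (Equiv.swap u i v) j * Equiv.swap u i with hg
      have hb' : Equiv.swap u i v ≠ i := by
        intro hcon
        have h2 : Equiv.swap u i v = Equiv.swap u i u := by
          rw [Equiv.swap_apply_left, hcon]
        exact huv ((Equiv.swap u i).injective h2.symm)
      have hga : g u = i := by
        rw [hg, Equiv.Perm.mul_apply, Equiv.swap_apply_left,
          Equiv.swap_apply_of_ne_of_ne (Ne.symm hb') hij]
      have hgb : g v = j := by
        rw [hg, Equiv.Perm.mul_apply, Equiv.swap_apply_left]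
      refine ⟨g, ?_⟩
      have h1 : g⁻¹ i = u := by rw [← hga, Equiv.Perm.inv_def, Equiv.symm_apply_apply]
      have h2 : g⁻¹ j = v := by rw [← hgb, Equiv.Perm.inv_def, Equiv.symm_apply_apply]
      rw [e g, h1, h2]
    have pairs_ind : ∀ (m : ℕ) (l : List (Equiv.Perm (Fin n))),
        (∀ g ∈ l, Equiv.Perm.IsSwap g) → l.length = 2 * m →
        l.prod ∈ Subgroup.closure S := by
      intro m
      induction m with
      | zero =>
        intro l _ hl
        simp only [Nat.mul_zero, List.length_eq_zero_iff] at hl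
        rw [hl, List.prod_nil]
        exact one_mem _
      | succ m ih =>
        intro l hsw hlen
        obtain ⟨g1, l1, rfl⟩ := l.exists_of_length_succ (n := 2 * m + 1) (by omega)
        obtain ⟨g2, l2, rfl⟩ := l1.exists_of_length_succ (n := 2 * m) (by
          simp only [List.length_cons] at hlen; omega)
        rw [List.prod_cons, List.prod_cons, ← mul_assoc]
        refine mul_mem ?_ (ih l2 (fun g hg => hsw g (by simp [hg])) (by
          simp only [List.length_cons] at hlen; omega))
        obtain ⟨u, v, huv, rfl⟩ := hsw g1 (by simp)
        obtain ⟨w, r, hwr, rfl⟩ := hsw g2 (by simp)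
        have hre : Equiv.swap u v * Equiv.swap w r = (Equiv.swap u v * Equiv.swap i j) *
            (Equiv.swap w r * Equiv.swap i j)⁻¹ := by
          simp [mul_inv_rev, Equiv.swap_inv, mul_assoc, Equiv.swap_mul_self_mul]
        rw [hre]
        exact mul_mem (Subgroup.subset_closure (hS u v huv))
          (inv_mem (Subgroup.subset_closure (hS w r hwr)))
    have hAle : alternatingGroup (Fin n) ≤ Subgroup.closure S := by
      intro σ hσ
      obtain ⟨l, hprod, hswap⟩ := (Equiv.Perm.truncSwapFactors σ).out
      have heven : Even l.length := by
        refine (Equiv.Perm.prod_list_swap_mem_alternatingGroup_iff_even_length hswap).mp ?_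
        rwa [hprod]
      obtain ⟨m, hm⟩ := heven
      rw [← hprod]
      exact pairs_ind m l hswap (by omega)
    haveI : Group.IsSolvable _ := hsolv
    haveI h2 : Group.IsSolvable (alternatingGroup (Fin n)) :=
      solvable_of_solvable_injective (Subgroup.inclusion_injective hAle)
    have h3 : IsSolvable (Equiv.Perm (Fin n)) := by
      refine solvable_of_ker_le_range (alternatingGroup (Fin n)).subtype Equiv.Perm.sign ?_
      rw [Subgroup.range_subtype]
      intro σ hσ
      exact Equiv.Perm.mem_alternatingGroup.mpr (MonoidHom.mem_ker.mp hσ)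
    exact Equiv.Perm.not_solvable (Fin n)
      (by rw [Cardinal.mk_fintype, Fintype.card_fin]; exact_mod_cast hn) h3
end

section
/- Let G be a finite group, M an abelian normal subgroup of G, α a coprime automorphism of G leaving M invariant, and x = [g,α] for some g ∈ G with gx ∈ G. If [M,x] ∩ [M,α] = 1 (where x denotes the inner automorphism by x composed appropriately), then C_M(xα⁻¹) ≤ C_M(α). -/
theorem fixed_points_of_twisted_action (G : Type*) [Group G] [Finite G]
    (α : MulAut G) (hcop : Nat.Coprime (Nat.card G) (orderOf α))
    (M : Subgroup G) [M.Normal] (hMab : ∀ a ∈ M, ∀ b ∈ M, a * b = b * a)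
    (hMinv : M.map α.toMonoidHom = M)
    (g : G) (x : G) (hx : x = g⁻¹ * α g)
    (hint : Subgroup.closure {y : G | ∃ m ∈ M, y = m⁻¹ * x⁻¹ * m * x} ⊓
            Subgroup.closure {y : G | ∃ m ∈ M, y = m⁻¹ * α m} = ⊥) :
    ∀ m ∈ M, x⁻¹ * m * x = α m → α m = m := by
  intro m hm heq
  have h1 : m⁻¹ * α m ∈ Subgroup.closure {y : G | ∃ m ∈ M, y = m⁻¹ * x⁻¹ * m * x} := by
    apply Subgroup.subset_closure
    exact ⟨m, hm, by rw [← heq]; group⟩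
  have h2 : m⁻¹ * α m ∈ Subgroup.closure {y : G | ∃ m ∈ M, y = m⁻¹ * α m} :=
    Subgroup.subset_closure ⟨m, hm, rfl⟩
  have : m⁻¹ * α m ∈ (⊥ : Subgroup G) := hint ▸ ⟨h1, h2⟩
  rw [Subgroup.mem_bot] at this
  have := mul_eq_one_iff_inv_eq.mp this
  rw [← this, inv_inv]
end
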